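/- Let U_r be the subspace from the sketched method of snapshots and U_r* the exact POD subspace minimizing (1/m)Σ‖u(μ^i) − P_{W}u(μ^i)‖_U² over r-dimensional W ⊆ range(U_m). If Θ is a U → ℓ2 ε-subspace embedding for the whole snapshot space range(U_m) (0 ≤ ε < 1), then (1/m) Σ_{i=1}^m ‖u(μ^i) − P_{U_r} u(μ^i)‖_U² ≤ (1/(1−ε)) Δ^POD(U_r) ≤ ((1+ε)/(1−ε)) (1/m) Σ_{i=1}^m ‖u(μ^i) − P_{U_r*} u(μ^i)‖_U². -/

import Mathlib

open Matrix BigOperators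

noncomputable section

/-- Inner product induced by `R`: `⟨x,y⟩_U = ⟨R x, y⟩`. -/
def ipR {n : ℕ} (R : Matrix (Fin n) (Fin n) ℝ) (x y : Fin n → ℝ) : ℝ :=
  R.mulVec x ⬝ᵥ y

/-- Norm induced by `R`. -/
def normR {n : ℕ} (R : Matrix (Fin n) (Fin n) ℝ) (x : Fin n → ℝ) : ℝ :=
  Real.sqrt (ipR R x x)

/-- Euclidean norm. -/
def norm2 {m : ℕ} (v : Fin m → ℝ) : ℝ :=
  Real.sqrt (v ⬝ᵥ v)

/-- Dual norm `‖y‖_{U'}` induced by `⟨·, R⁻¹ ·⟩`. -/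
def normDual {n : ℕ} (R : Matrix (Fin n) (Fin n) ℝ) (y : Fin n → ℝ) : ℝ :=
  Real.sqrt (y ⬝ᵥ R⁻¹.mulVec y)

/-- Dual seminorm `‖y‖_{Z'} = sup_{w ∈ Z, w ≠ 0} |⟨y,w⟩|/‖w‖_U`. -/
def dualSemi {n : ℕ} (R : Matrix (Fin n) (Fin n) ℝ) (Z : Submodule ℝ (Fin n → ℝ))
    (y : Fin n → ℝ) : ℝ :=
  ⨆ w : Z, |y ⬝ᵥ (w : Fin n → ℝ)| / normR R (w : Fin n → ℝ)

/-- Sketched dual seminorm `‖y‖_{Z'}^Θ = sup_{w ∈ Z, w ≠ 0} |⟨Θ R⁻¹ y, Θ w⟩|/‖Θ w‖`. -/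
def skDualSemi {n k : ℕ} (R : Matrix (Fin n) (Fin n) ℝ) (Θ : Matrix (Fin k) (Fin n) ℝ)
    (Z : Submodule ℝ (Fin n → ℝ)) (y : Fin n → ℝ) : ℝ :=
  ⨆ w : Z, |(Θ.mulVec (R⁻¹.mulVec y)) ⬝ᵥ (Θ.mulVec (w : Fin n → ℝ))| /
      norm2 (Θ.mulVec (w : Fin n → ℝ))

/-- `i`-th column of a matrix as a vector. -/
def colV {n m : ℕ} (M : Matrix (Fin n) (Fin m) ℝ) (i : Fin m) : Fin n → ℝ :=
  fun j => M j i

/-- Squared Frobenius norm. -/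
def frob2 {a b : ℕ} (M : Matrix (Fin a) (Fin b) ℝ) : ℝ :=
  ∑ i, ∑ j, (M i j) ^ 2

lemma sum_dotP {k : ℕ} {ι : Type*} (s : Finset ι) (f : ι → Fin k → ℝ) (x : Fin k → ℝ) :
    (∑ a ∈ s, f a) ⬝ᵥ x = ∑ a ∈ s, f a ⬝ᵥ x := by
  simp only [dotProduct, Finset.sum_apply, Finset.sum_mul]
  exact Finset.sum_comm

lemma dotP_sum {k : ℕ} {ι : Type*} (s : Finset ι) (f : ι → Fin k → ℝ) (x : Fin k → ℝ) :
    x ⬝ᵥ (∑ a ∈ s, f a) = ∑ a ∈ s, x ⬝ᵥ f a := by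
  simp only [dotProduct, Finset.sum_apply, Finset.mul_sum]
  exact Finset.sum_comm

lemma dotSelfNonneg {k : ℕ} (v : Fin k → ℝ) : 0 ≤ v ⬝ᵥ v :=
  Finset.sum_nonneg fun _ _ => mul_self_nonneg _

lemma sumMulVec {k m : ℕ} {ι : Type*} (s : Finset ι) (M : ι → Matrix (Fin k) (Fin m) ℝ)
    (v : Fin m → ℝ) : (∑ i ∈ s, M i) *ᵥ v = ∑ i ∈ s, M i *ᵥ v := by
  funext j
  simp only [mulVec, dotProduct, Finset.sum_apply, Matrix.sum_apply, Finset.sum_mul]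
  exact Finset.sum_comm

-- key quadratic form identity
lemma hAAkey {k m l : ℕ} (A : Matrix (Fin k) (Fin m) ℝ)
    (lam : Fin l → ℝ) (t : Fin l → (Fin m → ℝ))
    (hspec : Aᵀ * A = ∑ i, lam i • Matrix.vecMulVec (t i) (t i))
    (x y : Fin m → ℝ) :
    (A *ᵥ x) ⬝ᵥ (A *ᵥ y) = ∑ j, lam j * (t j ⬝ᵥ x) * (t j ⬝ᵥ y) := by
  have h1 : (A *ᵥ x) ⬝ᵥ (A *ᵥ y) = x ⬝ᵥ ((Aᵀ * A) *ᵥ y) := by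
    rw [← Matrix.mulVec_mulVec]
    rw [Matrix.dotProduct_mulVec x Aᵀ (A *ᵥ y), Matrix.vecMul_transpose]
  rw [h1, hspec, sumMulVec, dotP_sum]
  refine Finset.sum_congr rfl fun j _ => ?_
  rw [Matrix.smul_mulVec, dotProduct_smul]
  have h2 : Matrix.vecMulVec (t j) (t j) *ᵥ y = (t j ⬝ᵥ y) • t j := by
    funext p
    simp [mulVec, Matrix.vecMulVec_apply, dotProduct, Finset.mul_sum, mul_comm, mul_left_comm]
  rw [h2, dotProduct_smul, smul_eq_mul, smul_eq_mul, dotProduct_comm (t j) x]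
  ring

lemma bessel {k d : ℕ} (q : Fin d → (Fin k → ℝ))
    (hq : ∀ a b, q a ⬝ᵥ q b = if a = b then (1:ℝ) else 0) (x : Fin k → ℝ) :
    ∑ a, (q a ⬝ᵥ x) ^ 2 ≤ x ⬝ᵥ x := by
  classical
  have h := dotSelfNonneg (x - ∑ a, (q a ⬝ᵥ x) • q a)
  have hexp : (x - ∑ a, (q a ⬝ᵥ x) • q a) ⬝ᵥ (x - ∑ a, (q a ⬝ᵥ x) • q a)
      = x ⬝ᵥ x - ∑ a, (q a ⬝ᵥ x) ^ 2 := by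
    simp only [sub_dotProduct, dotProduct_sub, sum_dotP, dotP_sum,
      smul_dotProduct, dotProduct_smul, smul_eq_mul, hq]
    simp only [mul_ite, mul_one, mul_zero, Finset.sum_ite_eq', Finset.mem_univ, if_true]
    have hc : ∀ a, q a ⬝ᵥ x = x ⬝ᵥ q a := fun a => dotProduct_comm _ _
    simp [hc, pow_two]
  rw [hexp] at h
  linarith

-- representation of Aᵀ q in terms of the t basis
lemma hrepkey {k m l : ℕ} (A : Matrix (Fin k) (Fin m) ℝ)
    (lam : Fin l → ℝ) (t : Fin l → (Fin m → ℝ))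
    (hspec : Aᵀ * A = ∑ i, lam i • Matrix.vecMulVec (t i) (t i))
    (horth : ∀ i j : Fin l, t i ⬝ᵥ t j = if i = j then (1 : ℝ) else 0)
    (qv : Fin k → ℝ) :
    Aᵀ *ᵥ qv = ∑ j, ((A *ᵥ t j) ⬝ᵥ qv) • t j := by
  classical
  set w : Fin m → ℝ := Aᵀ *ᵥ qv - ∑ j, ((A *ᵥ t j) ⬝ᵥ qv) • t j with hw
  have hAtq : ∀ j : Fin l, t j ⬝ᵥ (Aᵀ *ᵥ qv) = (A *ᵥ t j) ⬝ᵥ qv := by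
    intro j
    rw [Matrix.dotProduct_mulVec, Matrix.vecMul_transpose]
  have hwt : ∀ j : Fin l, t j ⬝ᵥ w = 0 := by
    intro j
    rw [hw, dotProduct_sub, dotP_sum, hAtq]
    simp only [dotProduct_smul, smul_eq_mul, horth, mul_ite, mul_one, mul_zero,
      Finset.sum_ite_eq, Finset.sum_ite_eq', Finset.mem_univ, if_true]
    ring
  have hAw : A *ᵥ w = 0 := by
    have h0 : (A *ᵥ w) ⬝ᵥ (A *ᵥ w) = 0 := by
      rw [hAAkey A lam t hspec]
      refine Finset.sum_eq_zero fun j _ => ?_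
      rw [hwt j]; ring
    exact dotProduct_self_eq_zero.1 h0
  have hww : w ⬝ᵥ w = 0 := by
    have h1 : w ⬝ᵥ (Aᵀ *ᵥ qv) = 0 := by
      rw [Matrix.dotProduct_mulVec, Matrix.vecMul_transpose, dotProduct_comm, hAw,
        dotProduct_zero]
    have h2 : w ⬝ᵥ (∑ j, ((A *ᵥ t j) ⬝ᵥ qv) • t j) = 0 := by
      rw [dotP_sum]
      refine Finset.sum_eq_zero fun j _ => ?_
      rw [dotProduct_smul, dotProduct_comm w (t j), hwt j, smul_zero]
    have : w ⬝ᵥ w = w ⬝ᵥ (Aᵀ *ᵥ qv) - w ⬝ᵥ (∑ j, ((A *ᵥ t j) ⬝ᵥ qv) • t j) := by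
      rw [hw]; rw [dotProduct_sub]
    rw [this, h1, h2, sub_zero]
  have : w = 0 := dotProduct_self_eq_zero.1 hww
  exact sub_eq_zero.1 (hw ▸ this)

lemma comb {l r : ℕ} (hrl : r ≤ l) (lam B : Fin l → ℝ)
    (hpos : ∀ j, 0 < lam j) (hord : ∀ i j : Fin l, i ≤ j → lam j ≤ lam i)
    (hBnn : ∀ j, 0 ≤ B j) (hBle : ∀ j, B j ≤ lam j)
    (hsum : ∑ j, B j / lam j ≤ (r : ℝ)) :
    ∑ j, B j ≤ ∑ i : Fin r, lam (Fin.castLE hrl i) := by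
  classical
  set μ : ℝ := if h : r < l then lam ⟨r, h⟩ else 0 with hμ
  have hμ0 : 0 ≤ μ := by
    rw [hμ]; split
    · exact (hpos _).le
    · exact le_rfl
  -- pointwise bounds
  have key1 : ∀ j : Fin l, (j : ℕ) < r → B j ≤ lam j - μ + μ * (B j / lam j) := by
    intro j hj
    have hl0 : lam j ≠ 0 := (hpos j).ne'
    have hβ1 : B j / lam j ≤ 1 := (div_le_one (hpos j)).2 (hBle j)
    have hμle : μ ≤ lam j := by
      rw [hμ]; split
      · next h => exact hord j ⟨r, h⟩ (by exact Fin.le_def.2 hj.le)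
      · exact (hpos j).le
    have hBj : B j = lam j * (B j / lam j) := by field_simp
    nlinarith [hBnn j, hpos j]
  have key2 : ∀ j : Fin l, r ≤ (j : ℕ) → B j ≤ μ * (B j / lam j) := by
    intro j hj
    have hrl' : r < l := lt_of_le_of_lt hj j.2
    have hβ0 : 0 ≤ B j / lam j := div_nonneg (hBnn j) (hpos j).le
    have hμge : lam j ≤ μ := by
      rw [hμ, dif_pos hrl']
      exact hord ⟨r, hrl'⟩ j (Fin.le_def.2 hj)
    have hBj : B j = lam j * (B j / lam j) := by field_simp [(hpos j).ne']
    nlinarith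
  -- convert to range sums
  set F : ℕ → ℝ := fun jn => if h : jn < l then B ⟨jn, h⟩ else 0 with hF
  set G : ℕ → ℝ := fun jn => if h : jn < l then lam ⟨jn, h⟩ else 0 with hG
  set β : ℕ → ℝ := fun jn => if h : jn < l then B ⟨jn, h⟩ / lam ⟨jn, h⟩ else 0 with hβ
  have e1 : ∑ j, B j = ∑ jn ∈ Finset.range l, F jn := by
    rw [← Fin.sum_univ_eq_sum_range]
    exact Finset.sum_congr rfl fun j _ => by simp [hF]
  have e2 : ∑ i : Fin r, lam (Fin.castLE hrl i) = ∑ jn ∈ Finset.range r, G jn := by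
    rw [← Fin.sum_univ_eq_sum_range]
    refine Finset.sum_congr rfl fun i _ => ?_
    rw [hG]; simp only [dif_pos (lt_of_lt_of_le i.2 hrl)]; rfl
  have e3 : ∑ jn ∈ Finset.range l, β jn ≤ (r : ℝ) := by
    calc ∑ jn ∈ Finset.range l, β jn = ∑ j, B j / lam j := by
          rw [← Fin.sum_univ_eq_sum_range]
          exact Finset.sum_congr rfl fun j _ => by simp [hβ]
    _ ≤ (r : ℝ) := hsum
  rw [e1, e2]
  have hsplitF : ∑ jn ∈ Finset.range r, F jn + ∑ jn ∈ Finset.Ico r l, F jn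
      = ∑ jn ∈ Finset.range l, F jn := by
    rw [Finset.range_eq_Ico, Finset.range_eq_Ico]
    exact Finset.sum_Ico_consecutive F (Nat.zero_le r) hrl
  have hsplitβ : ∑ jn ∈ Finset.range r, β jn + ∑ jn ∈ Finset.Ico r l, β jn
      = ∑ jn ∈ Finset.range l, β jn := by
    rw [Finset.range_eq_Ico, Finset.range_eq_Ico]
    exact Finset.sum_Ico_consecutive β (Nat.zero_le r) hrl
  have b1 : ∑ jn ∈ Finset.range r, F jn
      ≤ ∑ jn ∈ Finset.range r, (G jn - μ + μ * β jn) := by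
    refine Finset.sum_le_sum fun jn hjn => ?_
    have hjl : jn < l := lt_of_lt_of_le (Finset.mem_range.1 hjn) hrl
    have := key1 ⟨jn, hjl⟩ (Finset.mem_range.1 hjn)
    simp only [hF, hG, hβ, dif_pos hjl]
    exact this
  have b2 : ∑ jn ∈ Finset.Ico r l, F jn ≤ ∑ jn ∈ Finset.Ico r l, μ * β jn := by
    refine Finset.sum_le_sum fun jn hjn => ?_
    obtain ⟨h1, h2⟩ := Finset.mem_Ico.1 hjn
    have := key2 ⟨jn, h2⟩ h1
    simp only [hF, hβ, dif_pos h2]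
    exact this
  have b3 : ∑ jn ∈ Finset.range r, (G jn - μ + μ * β jn)
      = ∑ jn ∈ Finset.range r, G jn - r * μ + μ * ∑ jn ∈ Finset.range r, β jn := by
    rw [Finset.sum_add_distrib, Finset.sum_sub_distrib, Finset.sum_const, Finset.card_range,
      Finset.mul_sum]
    ring_nf
  have b4 : ∑ jn ∈ Finset.Ico r l, μ * β jn = μ * ∑ jn ∈ Finset.Ico r l, β jn :=
    (Finset.mul_sum _ _ _).symm
  have hβr : 0 ≤ ∑ jn ∈ Finset.Ico r l, β jn :=
    Finset.sum_nonneg fun jn _ => by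
      by_cases h : jn < l <;> simp [hβ, h, div_nonneg (hBnn _) (hpos _).le]
  nlinarith [hsplitF, hsplitβ, b1, b2, b3, b4, e3, hβr,
    mul_le_mul_of_nonneg_left e3 hμ0]

lemma eckart_young {k m l r d : ℕ} (A : Matrix (Fin k) (Fin m) ℝ)
    (lam : Fin l → ℝ) (t : Fin l → (Fin m → ℝ)) (hrl : r ≤ l)
    (hspec : Aᵀ * A = ∑ i, lam i • Matrix.vecMulVec (t i) (t i))
    (horth : ∀ i j : Fin l, t i ⬝ᵥ t j = if i = j then (1 : ℝ) else 0)
    (hpos : ∀ i, 0 < lam i)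
    (hord : ∀ i j : Fin l, i ≤ j → lam j ≤ lam i)
    (hd : d ≤ r)
    (q : Fin d → (Fin k → ℝ))
    (hq : ∀ a b, q a ⬝ᵥ q b = if a = b then (1:ℝ) else 0)
    (b : Fin m → (Fin k → ℝ))
    (hb : ∀ i, ∃ c : Fin d → ℝ, b i = ∑ a, c a • q a) :
    (∑ j, lam j) - (∑ i : Fin r, lam (Fin.castLE hrl i)) ≤
      ∑ i, (colV A i - b i) ⬝ᵥ (colV A i - b i) := by
  classical
  -- columns as mulVec of single
  have hcol : ∀ i : Fin m, colV A i = A *ᵥ Pi.single i 1 := by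
    intro i; funext j
    simp [colV, Matrix.mulVec, dotProduct, Pi.single_apply, mul_ite]
  have hts : ∀ (j : Fin l) (i : Fin m), t j ⬝ᵥ Pi.single i 1 = t j i := by
    intro j i
    simp [dotProduct, Pi.single_apply, mul_ite]
  -- trace identity
  have htr : ∑ i, colV A i ⬝ᵥ colV A i = ∑ j, lam j := by
    have h1 : ∀ i : Fin m, colV A i ⬝ᵥ colV A i = ∑ j, lam j * (t j i) ^ 2 := by
      intro i
      rw [hcol, hAAkey A lam t hspec]
      exact Finset.sum_congr rfl fun j _ => by rw [hts]; ring
    rw [Finset.sum_congr rfl fun i _ => h1 i, Finset.sum_comm]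
    refine Finset.sum_congr rfl fun j _ => ?_
    have h2 : ∑ i, lam j * (t j i) ^ 2 = lam j * (t j ⬝ᵥ t j) := by
      simp [dotProduct, Finset.mul_sum, pow_two]
    rw [h2, horth, if_pos rfl, mul_one]
  -- column dot with a fixed vector as transpose mulVec
  have hcold : ∀ (qv : Fin k → ℝ) (i : Fin m), colV A i ⬝ᵥ qv = (Aᵀ *ᵥ qv) i := by
    intro qv i
    simp [colV, Matrix.mulVec, dotProduct, Matrix.transpose_apply]
  -- sum over columns of squared dots equals sum over spectrum
  have hAq : ∀ qv : Fin k → ℝ,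
      ∑ i, (colV A i ⬝ᵥ qv) ^ 2 = ∑ j, ((A *ᵥ t j) ⬝ᵥ qv) ^ 2 := by
    intro qv
    have h1 : ∑ i, (colV A i ⬝ᵥ qv) ^ 2 = (Aᵀ *ᵥ qv) ⬝ᵥ (Aᵀ *ᵥ qv) := by
      calc ∑ i, (colV A i ⬝ᵥ qv) ^ 2 = ∑ i, ((Aᵀ *ᵥ qv) i) ^ 2 :=
            Finset.sum_congr rfl fun i _ => by rw [hcold]
      _ = (Aᵀ *ᵥ qv) ⬝ᵥ (Aᵀ *ᵥ qv) := by simp [dotProduct, pow_two]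
    rw [h1, hrepkey A lam t hspec horth qv, sum_dotP]
    refine Finset.sum_congr rfl fun j _ => ?_
    rw [smul_dotProduct, dotP_sum]
    simp only [dotProduct_smul, smul_eq_mul, horth, mul_ite, mul_one, mul_zero,
      Finset.sum_ite_eq, Finset.sum_ite_eq', Finset.mem_univ, if_true]
    ring
  -- spectral weights
  set Bq : Fin l → ℝ := fun j => ∑ a, ((A *ᵥ t j) ⬝ᵥ q a) ^ 2 with hBq
  have hBnn : ∀ j, 0 ≤ Bq j := fun j => Finset.sum_nonneg fun a _ => sq_nonneg _
  have hss : ∀ i j : Fin l, (A *ᵥ t i) ⬝ᵥ (A *ᵥ t j) = if i = j then lam i else 0 := by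
    intro i j
    rw [hAAkey A lam t hspec]
    simp only [horth, mul_ite, mul_one, mul_zero]
    by_cases h : i = j
    · subst h
      simp [Finset.sum_ite_eq, Finset.sum_ite_eq']
    · rw [if_neg h]
      refine Finset.sum_eq_zero fun p _ => ?_
      by_cases h1 : p = i <;> by_cases h2 : p = j <;> simp_all
  have hBle : ∀ j, Bq j ≤ lam j := by
    intro j
    have h1 := bessel q hq (A *ᵥ t j)
    have h2 : ∀ a, (q a ⬝ᵥ (A *ᵥ t j)) ^ 2 = ((A *ᵥ t j) ⬝ᵥ q a) ^ 2 := fun a => by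
      rw [dotProduct_comm]
    rw [Finset.sum_congr rfl fun a _ => h2 a, hss j j, if_pos rfl] at h1
    exact h1
  -- normalized spectral directions
  have hBsum : ∑ j, Bq j / lam j ≤ (d : ℝ) := by
    set sh : Fin l → (Fin k → ℝ) := fun j => (Real.sqrt (lam j))⁻¹ • (A *ᵥ t j) with hsh
    have hshon : ∀ i j : Fin l, sh i ⬝ᵥ sh j = if i = j then (1:ℝ) else 0 := by
      intro i j
      rw [hsh]
      simp only [smul_dotProduct, dotProduct_smul, hss, smul_eq_mul]
      by_cases h : i = j
      · subst h
        rw [if_pos rfl, if_pos rfl]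
        have h3 : Real.sqrt (lam i) * Real.sqrt (lam i) = lam i :=
          Real.mul_self_sqrt (hpos i).le
        have h2 : Real.sqrt (lam i) ≠ 0 := ne_of_gt (Real.sqrt_pos.2 (hpos i))
        field_simp
        rw [Real.sq_sqrt (hpos i).le]
      · simp [h]
    have hsq : ∀ (j : Fin l) (a : Fin d),
        (sh j ⬝ᵥ q a) ^ 2 = ((A *ᵥ t j) ⬝ᵥ q a) ^ 2 / lam j := by
      intro j a
      rw [hsh]
      simp only [smul_dotProduct, smul_eq_mul]
      rw [mul_pow, ← Real.sqrt_inv]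
      rw [Real.sq_sqrt (inv_nonneg.2 (hpos j).le)]
      field_simp
    have h1 : ∀ a : Fin d, ∑ j, (sh j ⬝ᵥ q a) ^ 2 ≤ 1 := by
      intro a
      have := bessel sh hshon (q a)
      rwa [hq a a, if_pos rfl] at this
    calc ∑ j, Bq j / lam j = ∑ j, ∑ a, (sh j ⬝ᵥ q a) ^ 2 := by
          refine Finset.sum_congr rfl fun j _ => ?_
          rw [hBq]
          rw [Finset.sum_div]
          exact (Finset.sum_congr rfl fun a _ => (hsq j a).symm)
    _ = ∑ a, ∑ j, (sh j ⬝ᵥ q a) ^ 2 := Finset.sum_comm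
    _ ≤ ∑ a : Fin d, (1:ℝ) := Finset.sum_le_sum fun a _ => h1 a
    _ = (d : ℝ) := by simp
  -- per column lower bound
  have hper : ∀ i : Fin m, colV A i ⬝ᵥ colV A i - ∑ a, (colV A i ⬝ᵥ q a) ^ 2
      ≤ (colV A i - b i) ⬝ᵥ (colV A i - b i) := by
    intro i
    obtain ⟨c, hc⟩ := hb i
    set x := colV A i with hx
    have hexp : (x - b i) ⬝ᵥ (x - b i)
        = x ⬝ᵥ x - ∑ a, (x ⬝ᵥ q a) ^ 2 + ∑ a, (c a - x ⬝ᵥ q a) ^ 2 := by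
      rw [hc]
      simp only [sub_dotProduct, dotProduct_sub, sum_dotP, dotP_sum,
        smul_dotProduct, dotProduct_smul, smul_eq_mul, hq, mul_ite, mul_one, mul_zero,
        Finset.sum_ite_eq, Finset.sum_ite_eq', Finset.mem_univ, if_true]
      have hcomm : ∀ a, q a ⬝ᵥ x = x ⬝ᵥ q a := fun a => dotProduct_comm _ _
      simp only [hcomm]
      rw [show ∑ a, (c a - x ⬝ᵥ q a) ^ 2
          = ∑ a, (c a * c a - 2 * (c a * (x ⬝ᵥ q a)) + (x ⬝ᵥ q a) ^ 2) from
        Finset.sum_congr rfl fun a _ => by ring]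
      rw [Finset.sum_add_distrib, Finset.sum_sub_distrib, ← Finset.mul_sum]
      ring
    rw [hexp]
    have := Finset.sum_nonneg (fun a (_ : a ∈ Finset.univ) => sq_nonneg (c a - x ⬝ᵥ q a))
    linarith
  -- assemble
  have hsum1 : ∑ i, (colV A i ⬝ᵥ colV A i - ∑ a, (colV A i ⬝ᵥ q a) ^ 2)
      ≤ ∑ i, (colV A i - b i) ⬝ᵥ (colV A i - b i) :=
    Finset.sum_le_sum fun i _ => hper i
  have hsum2 : ∑ i, (colV A i ⬝ᵥ colV A i - ∑ a, (colV A i ⬝ᵥ q a) ^ 2)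
      = (∑ j, lam j) - ∑ j, Bq j := by
    rw [Finset.sum_sub_distrib, htr]
    congr 1
    calc ∑ i, ∑ a, (colV A i ⬝ᵥ q a) ^ 2 = ∑ a, ∑ i, (colV A i ⬝ᵥ q a) ^ 2 :=
          Finset.sum_comm
    _ = ∑ a, ∑ j, ((A *ᵥ t j) ⬝ᵥ q a) ^ 2 := Finset.sum_congr rfl fun a _ => hAq (q a)
    _ = ∑ j, Bq j := Finset.sum_comm
  have hcomb : ∑ j, Bq j ≤ ∑ i : Fin r, lam (Fin.castLE hrl i) := by
    refine comb hrl lam Bq hpos hord hBnn hBle (le_trans hBsum ?_)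
    exact_mod_cast Nat.cast_le.2 hd
  linarith [hsum1, hsum2.symm.le, hsum2.le]

lemma exists_orthonormal_span {k r : ℕ} (S : Submodule ℝ (Fin k → ℝ))
    (hS : Module.finrank ℝ S ≤ r) :
    ∃ d : ℕ, d ≤ r ∧ ∃ q : Fin d → (Fin k → ℝ),
      (∀ a b : Fin d, q a ⬝ᵥ q b = if a = b then (1:ℝ) else 0) ∧
      (∀ x ∈ S, ∃ c : Fin d → ℝ, x = ∑ a, c a • q a) := by
  classical
  set e := WithLp.linearEquiv 2 ℝ (Fin k → ℝ) with he
  set S' : Submodule ℝ (EuclideanSpace ℝ (Fin k)) := S.map e.symm.toLinearMap with hS'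
  have hfr : Module.finrank ℝ S' = Module.finrank ℝ S :=
    LinearEquiv.finrank_map_eq e.symm S
  have hdot : ∀ x y : EuclideanSpace ℝ (Fin k), (e x) ⬝ᵥ (e y) = inner ℝ x y := by
    intro x y
    simp [dotProduct, PiLp.inner_apply, RCLike.inner_apply, starRingEnd_apply, he, mul_comm]
  refine ⟨Module.finrank ℝ S', hfr ▸ hS, fun a => e ((stdOrthonormalBasis ℝ S' a : S') : EuclideanSpace ℝ (Fin k)), ?_, ?_⟩
  · intro a b
    rw [hdot]
    have := (stdOrthonormalBasis ℝ S').orthonormal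
    rw [orthonormal_iff_ite] at this
    have h2 := this a b
    exact h2
  · intro x hx
    have hx' : e.symm x ∈ S' := Submodule.mem_map_of_mem hx
    set B := stdOrthonormalBasis ℝ S'
    refine ⟨fun a => B.repr ⟨e.symm x, hx'⟩ a, ?_⟩
    have hr := B.sum_repr ⟨e.symm x, hx'⟩
    have hc : ((∑ a, B.repr ⟨e.symm x, hx'⟩ a • B a : S') : EuclideanSpace ℝ (Fin k))
        = e.symm x := by rw [hr]
    push_cast at hc
    calc x = e (e.symm x) := (e.apply_symm_apply x).symm
    _ = e (∑ a, B.repr ⟨e.symm x, hx'⟩ a • ((B a : S') : EuclideanSpace ℝ (Fin k))) := by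
        exact congrArg e hc.symm
    _ = ∑ a, B.repr ⟨e.symm x, hx'⟩ a • e ((B a : S') : EuclideanSpace ℝ (Fin k)) := by
        rw [map_sum]; simp

lemma sketch_resid {k m l r : ℕ} (A : Matrix (Fin k) (Fin m) ℝ)
    (lam : Fin l → ℝ) (t : Fin l → (Fin m → ℝ)) (hrl : r ≤ l)
    (hspec : Aᵀ * A = ∑ i, lam i • Matrix.vecMulVec (t i) (t i))
    (horth : ∀ i j : Fin l, t i ⬝ᵥ t j = if i = j then (1 : ℝ) else 0) :
    ∑ i, (colV A i - ∑ j : Fin r, (t (Fin.castLE hrl j) i) • (A *ᵥ t (Fin.castLE hrl j))) ⬝ᵥ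
        (colV A i - ∑ j : Fin r, (t (Fin.castLE hrl j) i) • (A *ᵥ t (Fin.castLE hrl j)))
      = (∑ j, lam j) - ∑ j : Fin r, lam (Fin.castLE hrl j) := by
  classical
  have hcol : ∀ i : Fin m, colV A i = A *ᵥ Pi.single i 1 := by
    intro i; funext j
    simp [colV, Matrix.mulVec, dotProduct, Pi.single_apply, mul_ite]
  have hts : ∀ (j : Fin l) (i : Fin m), t j ⬝ᵥ Pi.single i 1 = t j i := by
    intro j i
    simp [dotProduct, Pi.single_apply, mul_ite]
  have htr : ∑ i, colV A i ⬝ᵥ colV A i = ∑ j, lam j := by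
    have h1 : ∀ i : Fin m, colV A i ⬝ᵥ colV A i = ∑ j, lam j * (t j i) ^ 2 := by
      intro i
      rw [hcol, hAAkey A lam t hspec]
      exact Finset.sum_congr rfl fun j _ => by rw [hts]; ring
    rw [Finset.sum_congr rfl fun i _ => h1 i, Finset.sum_comm]
    refine Finset.sum_congr rfl fun j _ => ?_
    have h2 : ∑ i, lam j * (t j i) ^ 2 = lam j * (t j ⬝ᵥ t j) := by
      simp [dotProduct, Finset.mul_sum, pow_two]
    rw [h2, horth, if_pos rfl, mul_one]
  have hss : ∀ i j : Fin l, (A *ᵥ t i) ⬝ᵥ (A *ᵥ t j) = if i = j then lam i else 0 := by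
    intro i j
    rw [hAAkey A lam t hspec]
    simp only [horth, mul_ite, mul_one, mul_zero]
    by_cases h : i = j
    · subst h
      simp [Finset.sum_ite_eq, Finset.sum_ite_eq']
    · rw [if_neg h]
      refine Finset.sum_eq_zero fun p _ => ?_
      by_cases h1 : p = i <;> by_cases h2 : p = j <;> simp_all
  have hxs : ∀ (i : Fin m) (j0 : Fin l), colV A i ⬝ᵥ (A *ᵥ t j0) = lam j0 * t j0 i := by
    intro i j0
    rw [hcol, hAAkey A lam t hspec]
    have h3 : ∀ p : Fin l, lam p * (t p ⬝ᵥ Pi.single i 1) * (t p ⬝ᵥ t j0)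
        = if p = j0 then lam p * t p i else 0 := by
      intro p
      rw [hts, horth]
      by_cases h : p = j0 <;> simp [h]
    rw [Finset.sum_congr rfl fun p _ => h3 p]
    simp
  have hper : ∀ i : Fin m,
      (colV A i - ∑ j : Fin r, (t (Fin.castLE hrl j) i) • (A *ᵥ t (Fin.castLE hrl j))) ⬝ᵥ
        (colV A i - ∑ j : Fin r, (t (Fin.castLE hrl j) i) • (A *ᵥ t (Fin.castLE hrl j)))
      = colV A i ⬝ᵥ colV A i
        - ∑ j : Fin r, lam (Fin.castLE hrl j) * (t (Fin.castLE hrl j) i) ^ 2 := by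
    intro i
    set x := colV A i with hx
    set w : Fin k → ℝ := ∑ j : Fin r, (t (Fin.castLE hrl j) i) • (A *ᵥ t (Fin.castLE hrl j))
      with hw
    set T : ℝ := ∑ j : Fin r, lam (Fin.castLE hrl j) * (t (Fin.castLE hrl j) i) ^ 2 with hT
    have hxw : x ⬝ᵥ w = T := by
      rw [hw, dotP_sum, hT]
      refine Finset.sum_congr rfl fun j _ => ?_
      rw [dotProduct_smul, smul_eq_mul, hxs]
      ring
    have hwx : w ⬝ᵥ x = T := by rw [dotProduct_comm]; exact hxw
    have hww : w ⬝ᵥ w = T := by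
      rw [hw, sum_dotP]
      have h5 : ∀ j : Fin r, (t (Fin.castLE hrl j) i • (A *ᵥ t (Fin.castLE hrl j))) ⬝ᵥ w
          = lam (Fin.castLE hrl j) * t (Fin.castLE hrl j) i ^ 2 := by
        intro j
        rw [smul_dotProduct, hw, dotP_sum]
        have h4 : ∀ j' : Fin r, (A *ᵥ t (Fin.castLE hrl j)) ⬝ᵥ
            (t (Fin.castLE hrl j') i • (A *ᵥ t (Fin.castLE hrl j')))
            = if j = j' then t (Fin.castLE hrl j) i * lam (Fin.castLE hrl j) else 0 := by
          intro j'
          rw [dotProduct_smul, hss, smul_eq_mul]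
          by_cases h : j = j'
          · subst h; simp [mul_comm]
          · rw [if_neg (fun hc => h (Fin.castLE_injective hrl hc)), if_neg h, mul_zero]
        rw [Finset.sum_congr rfl fun j' _ => h4 j']
        simp only [Finset.sum_ite_eq, Finset.mem_univ, if_true, smul_eq_mul]
        ring
      rw [Finset.sum_congr rfl fun j _ => h5 j, hT]
    rw [sub_dotProduct, dotProduct_sub, dotProduct_sub, hxw, hwx, hww]
    ring
  rw [Finset.sum_congr rfl fun i _ => hper i, Finset.sum_sub_distrib, htr]
  congr 1
  rw [Finset.sum_comm]
  refine Finset.sum_congr rfl fun j _ => ?_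
  have h2 : ∑ i, lam (Fin.castLE hrl j) * (t (Fin.castLE hrl j) i) ^ 2
      = lam (Fin.castLE hrl j) * (t (Fin.castLE hrl j) ⬝ᵥ t (Fin.castLE hrl j)) := by
    simp [dotProduct, Finset.mul_sum, pow_two]
  rw [h2, horth, if_pos rfl, mul_one]

/-- Quasi-optimality of the subspace obtained by the sketched method of snapshots when
`Θ` is a `U → ℓ2` ε-subspace embedding for the whole snapshot space. -/
theorem sketched_pod_quasi_optimality {n m k r l : ℕ}
    (R : Matrix (Fin n) (Fin n) ℝ) (hR : R.PosDef)
    (Θ : Matrix (Fin k) (Fin n) ℝ) (Um : Matrix (Fin n) (Fin m) ℝ)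
    (ε : ℝ) (hε0 : 0 ≤ ε) (hε1 : ε < 1)
    (hemb : ∀ x ∈ LinearMap.range Um.mulVecLin, ∀ y ∈ LinearMap.range Um.mulVecLin,
      |ipR R x y - (Θ.mulVec x) ⬝ᵥ (Θ.mulVec y)| ≤ ε * normR R x * normR R y)
    -- the sketched method of snapshots subspace `U_r`
    (lam : Fin l → ℝ) (t : Fin l → (Fin m → ℝ)) (hrl : r ≤ l)
    (hspec : (Θ * Um)ᵀ * (Θ * Um) = ∑ i, lam i • Matrix.vecMulVec (t i) (t i))
    (horth : ∀ i j : Fin l, t i ⬝ᵥ t j = if i = j then (1 : ℝ) else 0)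
    (hpos : ∀ i, 0 < lam i)
    (hord : ∀ i j : Fin l, i ≤ j → lam j ≤ lam i)
    (Ur : Submodule ℝ (Fin n → ℝ))
    (hUr : Ur = Submodule.span ℝ
      (Set.range fun i : Fin r => Um.mulVec (t (Fin.castLE hrl i))))
    -- the exact POD subspace `U_r*`
    (Ustar : Submodule ℝ (Fin n → ℝ)) (hUstarSub : Ustar ≤ LinearMap.range Um.mulVecLin)
    (hUstarDim : Module.finrank ℝ Ustar = r)
    (ps : Fin m → (Fin n → ℝ))
    (hps : ∀ i, ps i ∈ Ustar ∧ ∀ w ∈ Ustar, ipR R (colV Um i - ps i) w = 0)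
    (hUstarOpt : ∀ W : Submodule ℝ (Fin n → ℝ), W ≤ LinearMap.range Um.mulVecLin →
      Module.finrank ℝ W = r →
      ∀ q : Fin m → (Fin n → ℝ),
        (∀ i, q i ∈ W ∧ ∀ w ∈ W, ipR R (colV Um i - q i) w = 0) →
        ∑ i, (normR R (colV Um i - ps i)) ^ 2 ≤ ∑ i, (normR R (colV Um i - q i)) ^ 2)
    -- `U`-orthogonal and `Θ`-orthogonal projections onto `U_r`
    (p : Fin m → (Fin n → ℝ))
    (hp : ∀ i, p i ∈ Ur ∧ ∀ w ∈ Ur, ipR R (colV Um i - p i) w = 0)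
    (pθ : Fin m → (Fin n → ℝ))
    (hpθ : ∀ i, pθ i ∈ Ur ∧
      ∀ w ∈ Ur, (Θ.mulVec (colV Um i - pθ i)) ⬝ᵥ (Θ.mulVec w) = 0) :
    (1 / (m : ℝ)) * ∑ i, (normR R (colV Um i - p i)) ^ 2 ≤
      (1 / (1 - ε)) *
        ((1 / (m : ℝ)) * ∑ i, (norm2 (Θ.mulVec (colV Um i - pθ i))) ^ 2) ∧
    (1 / (1 - ε)) *
        ((1 / (m : ℝ)) * ∑ i, (norm2 (Θ.mulVec (colV Um i - pθ i))) ^ 2) ≤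
      ((1 + ε) / (1 - ε)) *
        ((1 / (m : ℝ)) * ∑ i, (normR R (colV Um i - ps i)) ^ 2) := by
  classical
  have hε : (0:ℝ) < 1 - ε := by linarith
  have hRT : Rᵀ = R := by
    ext i j
    have h := congrFun (congrFun hR.1 i) j
    simpa [Matrix.conjTranspose_apply] using h
  have hipnn : ∀ x : Fin n → ℝ, 0 ≤ ipR R x x := by
    intro x
    rcases eq_or_ne x 0 with rfl | hx
    · simp [ipR]
    · have h := hR.dotProduct_mulVec_pos hx
      rw [show star x = x from by simp] at h
      rw [show ipR R x x = x ⬝ᵥ R *ᵥ x from dotProduct_comm _ _]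
      exact h.le
  have hipsymm : ∀ x y : Fin n → ℝ, ipR R x y = ipR R y x := by
    intro x y
    show R *ᵥ x ⬝ᵥ y = R *ᵥ y ⬝ᵥ x
    calc R *ᵥ x ⬝ᵥ y = y ⬝ᵥ (R *ᵥ x) := dotProduct_comm _ _
    _ = (y ᵥ* R) ⬝ᵥ x := Matrix.dotProduct_mulVec y R x
    _ = (Rᵀ *ᵥ y) ⬝ᵥ x := by rw [Matrix.mulVec_transpose]
    _ = R *ᵥ y ⬝ᵥ x := by rw [hRT]
  have hnR : ∀ x : Fin n → ℝ, normR R x ^ 2 = ipR R x x := fun x => Real.sq_sqrt (hipnn x)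
  have hnRm : ∀ x : Fin n → ℝ, normR R x * normR R x = ipR R x x :=
    fun x => Real.mul_self_sqrt (hipnn x)
  have hn2 : ∀ v : Fin k → ℝ, norm2 v ^ 2 = v ⬝ᵥ v := fun v => Real.sq_sqrt (dotSelfNonneg v)
  have hrange : ∀ v : Fin m → ℝ, Um *ᵥ v ∈ LinearMap.range Um.mulVecLin :=
    fun v => ⟨v, Matrix.mulVecLin_apply _ _⟩
  have hcolUm : ∀ i : Fin m, colV Um i = Um *ᵥ Pi.single i 1 := by
    intro i; funext j
    simp [colV, Matrix.mulVec, dotProduct, Pi.single_apply, mul_ite]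
  have humem : ∀ i : Fin m, colV Um i ∈ LinearMap.range Um.mulVecLin := by
    intro i; rw [hcolUm]; exact hrange _
  have hUrle : Ur ≤ LinearMap.range Um.mulVecLin := by
    rw [hUr]
    refine Submodule.span_le.2 ?_
    rintro _ ⟨i, rfl⟩
    exact hrange _
  have hm0 : (0:ℝ) ≤ 1 / (m:ℝ) := by positivity
  -- PART 1
  have part1 : ∀ i : Fin m, normR R (colV Um i - p i) ^ 2 * (1 - ε)
      ≤ norm2 (Θ *ᵥ (colV Um i - pθ i)) ^ 2 := by
    intro i
    set x := colV Um i - p i with hx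
    set y := p i - pθ i with hy
    set z := colV Um i - pθ i with hz
    have hzxy : z = x + y := by rw [hx, hy, hz]; abel
    have hxy : ipR R x y = 0 := (hp i).2 y (Submodule.sub_mem _ (hp i).1 (hpθ i).1)
    have hyx : ipR R y x = 0 := by rw [hipsymm]; exact hxy
    have hexp : ipR R (x + y) (x + y)
        = ipR R x x + ipR R x y + (ipR R y x + ipR R y y) := by
      simp [ipR, Matrix.mulVec_add, add_dotProduct, dotProduct_add]
      ring
    have hle1 : ipR R x x ≤ ipR R z z := by
      rw [hzxy, hexp, hxy, hyx]
      have := hipnn y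
      linarith
    have hzmem : z ∈ LinearMap.range Um.mulVecLin :=
      Submodule.sub_mem _ (humem i) (hUrle (hpθ i).1)
    have hembz := hemb z hzmem z hzmem
    rw [mul_assoc, hnRm] at hembz
    have habs := abs_le.1 hembz
    have hle2 : (1 - ε) * ipR R z z ≤ (Θ *ᵥ z) ⬝ᵥ (Θ *ᵥ z) := by
      have := habs.2
      nlinarith [hipnn z]
    rw [hnR, hn2]
    nlinarith [hipnn z]
  have S1 : (∑ i, normR R (colV Um i - p i) ^ 2) * (1 - ε)
      ≤ ∑ i, norm2 (Θ *ᵥ (colV Um i - pθ i)) ^ 2 := by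
    rw [Finset.sum_mul]
    exact Finset.sum_le_sum fun i _ => part1 i
  -- PART 2 setup
  set A := Θ * Um with hA
  have hcolA : ∀ i : Fin m, Θ *ᵥ colV Um i = colV A i := by
    intro i; funext j
    simp [colV, hA, Matrix.mulVec, dotProduct, Matrix.mul_apply]
  set c : Fin m → (Fin n → ℝ) :=
    fun i => ∑ j : Fin r, (t (Fin.castLE hrl j) i) • (Um *ᵥ t (Fin.castLE hrl j)) with hc
  have hcUr : ∀ i, c i ∈ Ur := by
    intro i
    rw [hUr, hc]
    refine Submodule.sum_mem _ fun j _ => Submodule.smul_mem _ _ ?_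
    exact Submodule.subset_span ⟨j, rfl⟩
  have hΘc : ∀ i, Θ *ᵥ c i
      = ∑ j : Fin r, (t (Fin.castLE hrl j) i) • (A *ᵥ t (Fin.castLE hrl j)) := by
    intro i
    simp only [hc]
    calc Θ *ᵥ (∑ j : Fin r, t (Fin.castLE hrl j) i • (Um *ᵥ t (Fin.castLE hrl j)))
        = Θ.mulVecLin (∑ j : Fin r, t (Fin.castLE hrl j) i • (Um *ᵥ t (Fin.castLE hrl j))) :=
          (Matrix.mulVecLin_apply _ _).symm
    _ = ∑ j : Fin r, t (Fin.castLE hrl j) i • Θ.mulVecLin (Um *ᵥ t (Fin.castLE hrl j)) := by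
        rw [map_sum]
        exact Finset.sum_congr rfl fun j _ => Θ.mulVecLin.map_smul _ _
    _ = ∑ j : Fin r, t (Fin.castLE hrl j) i • (A *ᵥ t (Fin.castLE hrl j)) := by
        refine Finset.sum_congr rfl fun j _ => ?_
        rw [Matrix.mulVecLin_apply, Matrix.mulVec_mulVec]
  have hper2 : ∀ i : Fin m, norm2 (Θ *ᵥ (colV Um i - pθ i)) ^ 2
      ≤ (Θ *ᵥ (colV Um i - c i)) ⬝ᵥ (Θ *ᵥ (colV Um i - c i)) := by
    intro i
    set zθ := Θ *ᵥ (colV Um i - pθ i) with hzθ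
    set yθ := Θ *ᵥ (pθ i - c i) with hyθ
    have hsplit : Θ *ᵥ (colV Um i - c i) = zθ + yθ := by
      rw [hzθ, hyθ, ← Matrix.mulVec_add]
      congr 1
      abel
    have hzy : zθ ⬝ᵥ yθ = 0 := (hpθ i).2 _ (Submodule.sub_mem _ (hpθ i).1 (hcUr i))
    have hyz : yθ ⬝ᵥ zθ = 0 := by rw [dotProduct_comm]; exact hzy
    rw [hsplit, hn2]
    have hexp : (zθ + yθ) ⬝ᵥ (zθ + yθ) = zθ ⬝ᵥ zθ + zθ ⬝ᵥ yθ + (yθ ⬝ᵥ zθ + yθ ⬝ᵥ yθ) := by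
      simp [add_dotProduct, dotProduct_add]
      ring
    rw [hexp, hzy, hyz]
    have := dotSelfNonneg yθ
    linarith
  have hresid : ∑ i, (Θ *ᵥ (colV Um i - c i)) ⬝ᵥ (Θ *ᵥ (colV Um i - c i))
      = (∑ j, lam j) - ∑ j : Fin r, lam (Fin.castLE hrl j) := by
    have hrw : ∀ i : Fin m, Θ *ᵥ (colV Um i - c i)
        = colV A i - ∑ j : Fin r, (t (Fin.castLE hrl j) i) • (A *ᵥ t (Fin.castLE hrl j)) := by
      intro i
      rw [Matrix.mulVec_sub, hcolA, hΘc]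
    have heqc : ∑ i : Fin m, (Θ *ᵥ (colV Um i - c i)) ⬝ᵥ (Θ *ᵥ (colV Um i - c i))
        = ∑ i : Fin m,
          (colV A i - ∑ j : Fin r, (t (Fin.castLE hrl j) i) • (A *ᵥ t (Fin.castLE hrl j))) ⬝ᵥ
          (colV A i - ∑ j : Fin r, (t (Fin.castLE hrl j) i) • (A *ᵥ t (Fin.castLE hrl j))) :=
      Finset.sum_congr rfl fun i _ => by rw [hrw i]
    rw [heqc]
    exact sketch_resid A lam t hrl hspec horth
  -- lower bound via Eckart-Young
  set S : Submodule ℝ (Fin k → ℝ) := Ustar.map Θ.mulVecLin with hS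
  have hfinS : Module.finrank ℝ S ≤ r := by
    rw [hS, ← hUstarDim]
    exact Submodule.finrank_map_le Θ.mulVecLin Ustar
  obtain ⟨d, hd, q, hq, hspan⟩ := exists_orthonormal_span S hfinS
  set b : Fin m → (Fin k → ℝ) := fun i => Θ *ᵥ ps i with hb
  have hbS : ∀ i, b i ∈ S := by
    intro i
    exact ⟨ps i, (hps i).1, Matrix.mulVecLin_apply _ _⟩
  have hbspan : ∀ i, ∃ cc : Fin d → ℝ, b i = ∑ a, cc a • q a := fun i => hspan (b i) (hbS i)
  have hEY := eckart_young A lam t hrl hspec horth hpos hord hd q hq b hbspan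
  have hbrw : ∀ i : Fin m, colV A i - b i = Θ *ᵥ (colV Um i - ps i) := by
    intro i
    rw [hb, Matrix.mulVec_sub, hcolA]
  have heqb : ∑ i : Fin m, (colV A i - b i) ⬝ᵥ (colV A i - b i)
      = ∑ i : Fin m, (Θ *ᵥ (colV Um i - ps i)) ⬝ᵥ (Θ *ᵥ (colV Um i - ps i)) :=
    Finset.sum_congr rfl fun i _ => by rw [hbrw i]
  rw [heqb] at hEY
  -- embedding upper bound for the exact POD vectors
  have hembup : ∀ i : Fin m, (Θ *ᵥ (colV Um i - ps i)) ⬝ᵥ (Θ *ᵥ (colV Um i - ps i))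
      ≤ (1 + ε) * normR R (colV Um i - ps i) ^ 2 := by
    intro i
    set z := colV Um i - ps i with hz
    have hzmem : z ∈ LinearMap.range Um.mulVecLin :=
      Submodule.sub_mem _ (humem i) (hUstarSub (hps i).1)
    have hembz := hemb z hzmem z hzmem
    rw [mul_assoc, hnRm] at hembz
    have habs := abs_le.1 hembz
    rw [hnR]
    nlinarith [habs.1]
  -- chain for part 2
  have S2 : ∑ i, norm2 (Θ *ᵥ (colV Um i - pθ i)) ^ 2
      ≤ (1 + ε) * ∑ i, normR R (colV Um i - ps i) ^ 2 := by
    calc ∑ i, norm2 (Θ *ᵥ (colV Um i - pθ i)) ^ 2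
        ≤ ∑ i, (Θ *ᵥ (colV Um i - c i)) ⬝ᵥ (Θ *ᵥ (colV Um i - c i)) :=
          Finset.sum_le_sum fun i _ => hper2 i
    _ = (∑ j, lam j) - ∑ j : Fin r, lam (Fin.castLE hrl j) := hresid
    _ ≤ ∑ i, (Θ *ᵥ (colV Um i - ps i)) ⬝ᵥ (Θ *ᵥ (colV Um i - ps i)) := hEY
    _ ≤ ∑ i, (1 + ε) * normR R (colV Um i - ps i) ^ 2 :=
          Finset.sum_le_sum fun i _ => hembup i
    _ = (1 + ε) * ∑ i, normR R (colV Um i - ps i) ^ 2 := by rw [Finset.mul_sum]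
  constructor
  · have h2 : (∑ i, normR R (colV Um i - p i) ^ 2)
        ≤ (1 / (1 - ε)) * ∑ i, norm2 (Θ *ᵥ (colV Um i - pθ i)) ^ 2 := by
      rw [div_mul_eq_mul_div, le_div_iff₀ hε]
      linarith [S1]
    calc (1 / (m:ℝ)) * ∑ i, normR R (colV Um i - p i) ^ 2
        ≤ (1 / (m:ℝ)) * ((1 / (1 - ε)) * ∑ i, norm2 (Θ *ᵥ (colV Um i - pθ i)) ^ 2) :=
          mul_le_mul_of_nonneg_left h2 hm0
    _ = (1 / (1 - ε)) * ((1 / (m:ℝ)) * ∑ i, norm2 (Θ *ᵥ (colV Um i - pθ i)) ^ 2) := by ring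
  · have h3 : (1 / (1 - ε)) * ∑ i, norm2 (Θ *ᵥ (colV Um i - pθ i)) ^ 2
        ≤ (1 / (1 - ε)) * ((1 + ε) * ∑ i, normR R (colV Um i - ps i) ^ 2) :=
      mul_le_mul_of_nonneg_left S2 (by positivity)
    calc (1 / (1 - ε)) * ((1 / (m:ℝ)) * ∑ i, norm2 (Θ *ᵥ (colV Um i - pθ i)) ^ 2)
        = (1 / (m:ℝ)) * ((1 / (1 - ε)) * ∑ i, norm2 (Θ *ᵥ (colV Um i - pθ i)) ^ 2) := by ring
    _ ≤ (1 / (m:ℝ)) * ((1 / (1 - ε)) * ((1 + ε) * ∑ i, normR R (colV Um i - ps i) ^ 2)) :=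
          mul_le_mul_of_nonneg_left h3 hm0
    _ = ((1 + ε) / (1 - ε)) * ((1 / (m:ℝ)) * ∑ i, normR R (colV Um i - ps i) ^ 2) := by ring
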